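/- Let 𝔤 be a finite-dimensional real Lie algebra with a time-dependent inner product G(t) satisfying dG/dt = −2Ric_G (the Ricci flow for left-invariant metrics on a nilpotent group). Then d/dt R_G = 2|Ric_G|² and d/dt |Ric_G|² = −|δ(Rc_G)|², where R_G = −(1/4)|[·,·]|²_G, Rc_G = G⁻¹Ric_G, and δ(A)(x,y) = A[x,y] − [Ax,y] − [x,Ay]. -/

import Mathlib

open Matrix

namespace RFN

variable {n : ℕ}

/-- Bracket determined by structure constants: `[e i, e j] = ∑ k, c i j k • e k`. -/
def bra (c : Fin n → Fin n → Fin n → ℝ) (x y : Fin n → ℝ) : Fin n → ℝ :=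
  fun k => ∑ i, ∑ j, x i * y j * c i j k

/-- `c` is a family of structure constants of a Lie algebra. -/
def IsLieSC (c : Fin n → Fin n → Fin n → ℝ) : Prop :=
  (∀ i j k, c i j k = - c j i k) ∧
  ∀ x y z, bra c (bra c x y) z + bra c (bra c y z) x + bra c (bra c z x) y = 0

def adIter (c : Fin n → Fin n → Fin n → ℝ) (v : ℕ → Fin n → ℝ) :
    ℕ → (Fin n → ℝ) → (Fin n → ℝ)
  | 0, x => x
  | m + 1, x => bra c (v m) (adIter c v m x)

/-- Nilpotency of the Lie algebra with structure constants `c`. -/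
def IsNilpotentSC (c : Fin n → Fin n → Fin n → ℝ) : Prop :=
  ∃ N : ℕ, ∀ v x, adIter c v N x = 0

/-- Inner product of vectors with respect to the metric matrix `G`. -/
def gdot (G : Matrix (Fin n) (Fin n) ℝ) (x y : Fin n → ℝ) : ℝ :=
  ∑ i, ∑ j, x i * G i j * y j

/-- Components of the Ricci bilinear form of the invariant metric `G`:
`Ric_G(x,y) = -(1/2) Σ G([x,e_i],[y,e_j])G^{ij} + (1/4) Σ G^{ip}G^{jq}G([e_i,e_j],x)G([e_p,e_q],y)`. -/
noncomputable def Ricm (c : Fin n → Fin n → Fin n → ℝ) (G : Matrix (Fin n) (Fin n) ℝ) :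
    Matrix (Fin n) (Fin n) ℝ :=
  Matrix.of fun a b =>
    -(1/2) * (∑ i, ∑ j, G⁻¹ i j * gdot G (c a i) (c b j))
    + (1/4) * (∑ i, ∑ j, ∑ p, ∑ q, G⁻¹ i p * G⁻¹ j q *
        (∑ k, c i j k * G k a) * (∑ l, c p q l * G l b))

/-- Scalar curvature `R_G = -(1/4)|[·,·]|²_G`. -/
noncomputable def scalR (c : Fin n → Fin n → Fin n → ℝ) (G : Matrix (Fin n) (Fin n) ℝ) : ℝ :=
  -(1/4) * (∑ i, ∑ j, ∑ p, ∑ q, G⁻¹ i p * G⁻¹ j q * gdot G (c i j) (c p q))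

/-- Ricci endomorphism `Rc_G = G⁻¹ Ric_G`. -/
noncomputable def Rc (c : Fin n → Fin n → Fin n → ℝ) (G : Matrix (Fin n) (Fin n) ℝ) :
    Matrix (Fin n) (Fin n) ℝ := G⁻¹ * Ricm c G

/-- `δ(A)(e_i,e_j) = A[e_i,e_j] - [A e_i, e_j] - [e_i, A e_j]` (components). -/
def deltaE (c : Fin n → Fin n → Fin n → ℝ) (A : Matrix (Fin n) (Fin n) ℝ) :
    Fin n → Fin n → Fin n → ℝ :=
  fun i j k => (∑ l, A k l * c i j l) - (∑ l, A l i * c l j k) - (∑ l, A l j * c i l k)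

/-- The inner product on `Λ²𝔤*⊗𝔤` induced by `G` (full sum over ordered pairs). -/
noncomputable def tinner (G : Matrix (Fin n) (Fin n) ℝ) (μ ν : Fin n → Fin n → Fin n → ℝ) : ℝ :=
  ∑ i, ∑ j, ∑ p, ∑ q, G⁻¹ i p * G⁻¹ j q * gdot G (μ i j) (ν p q)

/-- The (Hilbert–Schmidt) inner product of endomorphisms induced by `G`. -/
noncomputable def einner (G : Matrix (Fin n) (Fin n) ℝ) (A B : Matrix (Fin n) (Fin n) ℝ) : ℝ :=
  ∑ i, ∑ j, G⁻¹ i j * gdot G (fun k => A k i) (fun k => B k j)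

/-- The inner product of bilinear forms induced by `G`. -/
noncomputable def binner (G : Matrix (Fin n) (Fin n) ℝ) (S T : Matrix (Fin n) (Fin n) ℝ) : ℝ :=
  ∑ i, ∑ j, ∑ p, ∑ q, G⁻¹ i p * G⁻¹ j q * S i j * T p q

/-- `|Ric_G|²`. -/
noncomputable def ric2 (c : Fin n → Fin n → Fin n → ℝ) (G : Matrix (Fin n) (Fin n) ℝ) : ℝ :=
  binner G (Ricm c G) (Ricm c G)

/-- The functional `W₊(G,τ) = τ R_G + τ² |Ric_G|²`. -/
noncomputable def Wplus (c : Fin n → Fin n → Fin n → ℝ) (G : Matrix (Fin n) (Fin n) ℝ) (τ : ℝ) : ℝ :=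
  τ * scalR c G + τ ^ 2 * ric2 c G

/-- Structure constants of the 3-dimensional Heisenberg Lie algebra: `[e₀,e₁] = e₂`, `e₂` central. -/
def heis : Fin 3 → Fin 3 → Fin 3 → ℝ := fun i j k =>
  if i = 0 ∧ j = 1 ∧ k = 2 then 1 else if i = 1 ∧ j = 0 ∧ k = 2 then -1 else 0

def sl (μ : Fin n → Fin n → Fin n → ℝ) (k : Fin n) : Matrix (Fin n) (Fin n) ℝ :=
  Matrix.of fun i j => μ i j k

def S3 (f : Fin n → Fin n → Fin n → ℝ) : ℝ := ∑ i, ∑ j, ∑ k, f i j k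
def S4 (f : Fin n → Fin n → Fin n → Fin n → ℝ) : ℝ := ∑ i, ∑ j, ∑ p, ∑ q, f i j p q
def S6 (f : Fin n → Fin n → Fin n → Fin n → Fin n → Fin n → ℝ) : ℝ :=
  ∑ i, ∑ j, ∑ p, ∑ q, ∑ k, ∑ l, f i j p q k l

lemma S3_eq (f : Fin n → Fin n → Fin n → ℝ) :
    S3 f = ∑ x : Fin n × Fin n × Fin n, f x.1 x.2.1 x.2.2 := by
  simp [S3, Fintype.sum_prod_type]

lemma S4_eq (f : Fin n → Fin n → Fin n → Fin n → ℝ) :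
    S4 f = ∑ x : Fin n × Fin n × Fin n × Fin n, f x.1 x.2.1 x.2.2.1 x.2.2.2 := by
  simp [S4, Fintype.sum_prod_type]

lemma S6_eq (f : Fin n → Fin n → Fin n → Fin n → Fin n → Fin n → ℝ) :
    S6 f = ∑ x : Fin n × Fin n × Fin n × Fin n × Fin n × Fin n,
      f x.1 x.2.1 x.2.2.1 x.2.2.2.1 x.2.2.2.2.1 x.2.2.2.2.2 := by
  simp [S6, Fintype.sum_prod_type]

lemma rsmul (r x : ℝ) : r • x = r * x := rfl

lemma trace2 (M N : Matrix (Fin n) (Fin n) ℝ) :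
    ∑ a, ∑ b, M a b * N b a = Matrix.trace (M * N) := by
  simp [Matrix.trace, Matrix.mul_apply, Matrix.diag]

lemma masterT (K L Γ : Matrix (Fin n) (Fin n) ℝ) (hK : ∀ i j, K i j = K j i)
    (μ ν : Fin n → Fin n → Fin n → ℝ) :
    ∑ i, ∑ j, ∑ p, ∑ q, K i p * L j q * gdot Γ (μ i j) (ν p q)
      = ∑ k, ∑ l, Γ k l * Matrix.trace (sl μ k * L * (sl ν l)ᵀ * K) := by
  simp only [gdot, Matrix.trace, Matrix.diag, Matrix.mul_apply, Matrix.transpose_apply,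
    sl, Matrix.of_apply, Finset.mul_sum, Finset.sum_mul]
  show S6 (fun i j p q k l => K i p * L j q * (μ i j k * Γ k l * ν p q l))
      = S6 (fun k l a b c d => Γ k l * (μ a d k * L d c * ν b c l * K b a))
  rw [S6_eq, S6_eq]
  refine Fintype.sum_equiv
    ⟨fun x => (x.2.2.2.2.1, x.2.2.2.2.2, x.1, x.2.2.1, x.2.2.2.1, x.2.1),
     fun x => (x.2.2.1, x.2.2.2.2.2, x.2.2.2.1, x.2.2.2.2.1, x.1, x.2.1),
     fun _ => rfl, fun _ => rfl⟩ _ _ (fun x => ?_)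
  obtain ⟨i, j, p, q, k, l⟩ := x
  simp only [Equiv.coe_fn_mk]
  rw [hK i p]; ring


lemma binner_slice (Γ : Matrix (Fin n) (Fin n) ℝ) (hJ : ∀ i j, Γ⁻¹ i j = Γ⁻¹ j i)
    (S T : Matrix (Fin n) (Fin n) ℝ) :
    binner Γ S T = Matrix.trace (S * Γ⁻¹ * Tᵀ * Γ⁻¹) := by
  simp only [binner, Matrix.trace, Matrix.diag, Matrix.mul_apply, Matrix.transpose_apply,
    Finset.mul_sum, Finset.sum_mul]
  show S4 (fun i j p q => Γ⁻¹ i p * Γ⁻¹ j q * S i j * T p q)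
      = S4 (fun a b c d => S a d * Γ⁻¹ d c * T b c * Γ⁻¹ b a)
  rw [S4_eq, S4_eq]
  refine Fintype.sum_equiv
    ⟨fun x => (x.1, x.2.2.1, x.2.2.2, x.2.1), fun x => (x.1, x.2.2.2, x.2.1, x.2.2.1),
     fun _ => rfl, fun _ => rfl⟩ _ _ (fun x => ?_)
  obtain ⟨i, j, p, q⟩ := x
  simp only [Equiv.coe_fn_mk]
  rw [hJ i p]; ring

lemma deltaE_slice (c : Fin n → Fin n → Fin n → ℝ) (A : Matrix (Fin n) (Fin n) ℝ) (k : Fin n) :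
    sl (deltaE c A) k = (∑ m, A k m • sl c m) - Aᵀ * sl c k - sl c k * A := by
  ext i j
  simp only [sl, deltaE, Matrix.of_apply, Matrix.sub_apply, Matrix.sum_apply,
    Matrix.smul_apply, Matrix.mul_apply, Matrix.transpose_apply, smul_eq_mul]
  have h3 : ∑ x, c i x k * A x j = ∑ x, A x j * c i x k :=
    Finset.sum_congr rfl fun x _ => mul_comm _ _
  rw [h3]

lemma entry_smul (r : ℝ) (M : Matrix (Fin n) (Fin n) ℝ) (a b : Fin n) :
    (r • M) a b = r * M a b := rfl

lemma Ricm_h1 (c : Fin n → Fin n → Fin n → ℝ) (Γ : Matrix (Fin n) (Fin n) ℝ) (a b : Fin n) :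
    (∑ i, ∑ j, Γ⁻¹ i j * gdot Γ (c a i) (c b j))
      = ∑ k, ∑ l, Γ k l * ((sl c k * Γ⁻¹ * (sl c l)ᵀ) a b) := by
  simp only [gdot, Matrix.mul_apply, Matrix.transpose_apply, sl, Matrix.of_apply,
    Finset.mul_sum, Finset.sum_mul]
  show S4 (fun i0 j0 k0 l0 => Γ⁻¹ i0 j0 * (c a i0 k0 * Γ k0 l0 * c b j0 l0))
      = S4 (fun k l j' i' => Γ k l * (c a i' k * Γ⁻¹ i' j' * c b j' l))
  rw [S4_eq, S4_eq]
  refine Fintype.sum_equiv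
    ⟨fun x => (x.2.2.1, x.2.2.2, x.2.1, x.1), fun y => (y.2.2.2, y.2.2.1, y.1, y.2.1),
     fun _ => rfl, fun _ => rfl⟩ _ _ (fun x => ?_)
  obtain ⟨i0, j0, k0, l0⟩ := x
  simp only [Equiv.coe_fn_mk]
  ring

lemma Ricm_h2 (c : Fin n → Fin n → Fin n → ℝ) (Γ : Matrix (Fin n) (Fin n) ℝ)
    (hΓ : ∀ i j, Γ i j = Γ j i) (hJ : ∀ i j, Γ⁻¹ i j = Γ⁻¹ j i) (a b : Fin n) :
    (∑ i, ∑ j, ∑ p, ∑ q, Γ⁻¹ i p * Γ⁻¹ j q * (∑ k, c i j k * Γ k a) * (∑ l, c p q l * Γ l b))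
      = (Γ * (Matrix.of fun k l =>
          Matrix.trace (sl c k * Γ⁻¹ * (sl c l)ᵀ * Γ⁻¹)) * Γ) a b := by
  simp only [Matrix.mul_apply, Matrix.transpose_apply, sl, Matrix.of_apply, Matrix.trace,
    Matrix.diag, Finset.mul_sum, Finset.sum_mul]
  show S6 (fun i0 j0 p0 q0 k2 k1 =>
      Γ⁻¹ i0 p0 * Γ⁻¹ j0 q0 * (c i0 j0 k1 * Γ k1 a) * (c p0 q0 k2 * Γ k2 b))
    = S6 (fun K2 K1 p' b' c' d' =>
      Γ a K1 * (c p' d' K1 * Γ⁻¹ d' c' * c b' c' K2 * Γ⁻¹ b' p') * Γ K2 b)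
  rw [S6_eq, S6_eq]
  refine Fintype.sum_equiv
    ⟨fun x => (x.2.2.2.2.1, x.2.2.2.2.2, x.1, x.2.2.1, x.2.2.2.1, x.2.1),
     fun y => (y.2.2.1, y.2.2.2.2.2, y.2.2.2.1, y.2.2.2.2.1, y.1, y.2.1),
     fun _ => rfl, fun _ => rfl⟩ _ _ (fun x => ?_)
  obtain ⟨i0, j0, p0, q0, k2, k1⟩ := x
  simp only [Equiv.coe_fn_mk]
  rw [hJ i0 p0, hΓ k1 a]
  ring

lemma Ricm_slice (c : Fin n → Fin n → Fin n → ℝ) (Γ : Matrix (Fin n) (Fin n) ℝ)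
    (hΓ : ∀ i j, Γ i j = Γ j i) (hJ : ∀ i j, Γ⁻¹ i j = Γ⁻¹ j i) :
    Ricm c Γ = (-(1/2) : ℝ) • (∑ k, ∑ l, Γ k l • (sl c k * Γ⁻¹ * (sl c l)ᵀ))
      + ((1/4) : ℝ) • (Γ * (Matrix.of fun k l =>
          Matrix.trace (sl c k * Γ⁻¹ * (sl c l)ᵀ * Γ⁻¹)) * Γ) := by
  have hM : ∀ a b : Fin n, ((-(1/2) : ℝ) • (∑ k, ∑ l, Γ k l • (sl c k * Γ⁻¹ * (sl c l)ᵀ))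
      + ((1/4) : ℝ) • (Γ * (Matrix.of fun k l =>
          Matrix.trace (sl c k * Γ⁻¹ * (sl c l)ᵀ * Γ⁻¹)) * Γ)) a b
      = -(1/2) * (∑ k, ∑ l, Γ k l * ((sl c k * Γ⁻¹ * (sl c l)ᵀ) a b))
        + (1/4) * ((Γ * (Matrix.of fun k l =>
          Matrix.trace (sl c k * Γ⁻¹ * (sl c l)ᵀ * Γ⁻¹)) * Γ) a b) := by
    intro a b
    simp only [Matrix.add_apply, entry_smul, Matrix.sum_apply]
  ext a b
  rw [hM a b, ← Ricm_h1 c Γ a b, ← Ricm_h2 c Γ hΓ hJ a b]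
  rfl


lemma tinner_slice (Γ : Matrix (Fin n) (Fin n) ℝ) (hJ : ∀ i j, Γ⁻¹ i j = Γ⁻¹ j i)
    (μ ν : Fin n → Fin n → Fin n → ℝ) :
    tinner Γ μ ν = ∑ k, ∑ l, Γ k l * Matrix.trace (sl μ k * Γ⁻¹ * (sl ν l)ᵀ * Γ⁻¹) :=
  masterT _ _ _ hJ μ ν

lemma swapG (Γ : Matrix (Fin n) (Fin n) ℝ) (hΓ : ∀ i j, Γ i j = Γ j i)
    (F : Fin n → Fin n → ℝ) :
    ∑ k, ∑ l, Γ k l * F k l = ∑ k, ∑ l, Γ k l * F l k := by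
  rw [Finset.sum_comm]
  exact Finset.sum_congr rfl fun k _ => Finset.sum_congr rfl fun l _ => by rw [hΓ k l]

lemma swapGM (Γ : Matrix (Fin n) (Fin n) ℝ) (hΓ : ∀ i j, Γ i j = Γ j i)
    (F : Fin n → Fin n → Matrix (Fin n) (Fin n) ℝ) :
    ∑ k, ∑ l, Γ k l • F k l = ∑ k, ∑ l, Γ k l • F l k := by
  rw [Finset.sum_comm]
  exact Finset.sum_congr rfl fun k _ => Finset.sum_congr rfl fun l _ => by rw [hΓ k l]

lemma Ricm_symm (c : Fin n → Fin n → Fin n → ℝ) (Γ : Matrix (Fin n) (Fin n) ℝ)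
    (hΓ : ∀ i j, Γ i j = Γ j i) (hJ : ∀ i j, Γ⁻¹ i j = Γ⁻¹ j i) :
    (Ricm c Γ)ᵀ = Ricm c Γ := by
  have hJT : (Γ⁻¹)ᵀ = Γ⁻¹ := Matrix.ext fun i j => hJ j i
  have hΓT : Γᵀ = Γ := Matrix.ext fun i j => hΓ j i
  have hSm : ∀ k l : Fin n, Matrix.trace (sl c l * Γ⁻¹ * (sl c k)ᵀ * Γ⁻¹)
      = Matrix.trace (sl c k * Γ⁻¹ * (sl c l)ᵀ * Γ⁻¹) := by
    intro k l
    rw [← Matrix.trace_transpose (sl c l * Γ⁻¹ * (sl c k)ᵀ * Γ⁻¹)]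
    simp only [Matrix.transpose_mul, Matrix.transpose_transpose, hJT]
    rw [Matrix.trace_mul_comm]
    simp only [Matrix.mul_assoc]
  rw [Ricm_slice c Γ hΓ hJ]
  rw [Matrix.transpose_add, Matrix.transpose_smul, Matrix.transpose_smul]
  congr 1
  · congr 1
    calc (∑ k, ∑ l, Γ k l • (sl c k * Γ⁻¹ * (sl c l)ᵀ))ᵀ
        = ∑ k, ∑ l, Γ k l • (sl c l * Γ⁻¹ * (sl c k)ᵀ) := by
          rw [Matrix.transpose_sum]
          refine Finset.sum_congr rfl fun k _ => ?_
          rw [Matrix.transpose_sum]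
          refine Finset.sum_congr rfl fun l _ => ?_
          rw [Matrix.transpose_smul]
          congr 1
          simp only [Matrix.transpose_mul, Matrix.transpose_transpose, hJT,
            Matrix.mul_assoc]
      _ = ∑ k, ∑ l, Γ k l • (sl c k * Γ⁻¹ * (sl c l)ᵀ) := by
          rw [swapGM Γ hΓ fun k l => sl c l * Γ⁻¹ * (sl c k)ᵀ]
  · congr 1
    rw [Matrix.transpose_mul, Matrix.transpose_mul, hΓT, Matrix.mul_assoc]
    have h2 : (Matrix.of fun k l => Matrix.trace (sl c k * Γ⁻¹ * (sl c l)ᵀ * Γ⁻¹))ᵀ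
        = Matrix.of fun k l => Matrix.trace (sl c k * Γ⁻¹ * (sl c l)ᵀ * Γ⁻¹) :=
      Matrix.ext fun k l => hSm k l
    rw [h2, ← Matrix.mul_assoc]

lemma traceJRicA (c : Fin n → Fin n → Fin n → ℝ) (Γ : Matrix (Fin n) (Fin n) ℝ)
    (hΓ : ∀ i j, Γ i j = Γ j i) (hJ : ∀ i j, Γ⁻¹ i j = Γ⁻¹ j i)
    (hJG : Γ⁻¹ * Γ = 1) (A : Matrix (Fin n) (Fin n) ℝ) :
    Matrix.trace (Γ⁻¹ * Ricm c Γ * A)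
      = -(1/2) * (∑ k, ∑ l, Γ k l * Matrix.trace (Γ⁻¹ * (sl c k * Γ⁻¹ * (sl c l)ᵀ) * A))
        + (1/4) * (∑ k, ∑ l,
            Matrix.trace (sl c k * Γ⁻¹ * (sl c l)ᵀ * Γ⁻¹) * (Γ * A) l k) := by
  rw [Ricm_slice c Γ hΓ hJ]
  rw [Matrix.mul_add, Matrix.add_mul, Matrix.trace_add]
  congr 1
  · rw [Matrix.mul_smul, Matrix.smul_mul, Matrix.trace_smul, rsmul]
    congr 1
    have hexp : Γ⁻¹ * (∑ k, ∑ l, Γ k l • (sl c k * Γ⁻¹ * (sl c l)ᵀ)) * A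
        = ∑ k, ∑ l, Γ k l • (Γ⁻¹ * (sl c k * Γ⁻¹ * (sl c l)ᵀ) * A) := by
      simp only [Finset.mul_sum, Finset.sum_mul, Matrix.mul_smul, Matrix.smul_mul]
    rw [hexp, Matrix.trace_sum]
    refine Finset.sum_congr rfl fun k _ => ?_
    rw [Matrix.trace_sum]
    refine Finset.sum_congr rfl fun l _ => ?_
    rw [Matrix.trace_smul, rsmul]
  · rw [Matrix.mul_smul, Matrix.smul_mul, Matrix.trace_smul, rsmul]
    congr 1
    have h1 : Γ⁻¹ * (Γ * (Matrix.of fun k l =>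
          Matrix.trace (sl c k * Γ⁻¹ * (sl c l)ᵀ * Γ⁻¹)) * Γ) * A
        = (Matrix.of fun k l => Matrix.trace (sl c k * Γ⁻¹ * (sl c l)ᵀ * Γ⁻¹)) * (Γ * A) := by
      calc Γ⁻¹ * (Γ * (Matrix.of fun k l =>
          Matrix.trace (sl c k * Γ⁻¹ * (sl c l)ᵀ * Γ⁻¹)) * Γ) * A
          = (Γ⁻¹ * Γ) * ((Matrix.of fun k l =>
              Matrix.trace (sl c k * Γ⁻¹ * (sl c l)ᵀ * Γ⁻¹)) * (Γ * A)) := by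
            simp only [Matrix.mul_assoc]
        _ = _ := by rw [hJG, one_mul]
    rw [h1, ← trace2]
    exact Finset.sum_congr rfl fun k _ => Finset.sum_congr rfl fun l _ => rfl

lemma E1gen (Γ A : Matrix (Fin n) (Fin n) ℝ) (hΓ : ∀ i j, Γ i j = Γ j i)
    (T : Fin n → Fin n → ℝ) :
    ∑ k, ∑ l, Γ k l * (∑ m, A k m * T m l) = ∑ k, ∑ l, T k l * (Γ * A) l k := by
  simp only [Matrix.mul_apply, Finset.mul_sum, Finset.sum_mul]
  show S3 (fun k l m => Γ k l * (A k m * T m l)) = S3 (fun k' l' x => T k' l' * (Γ l' x * A x k'))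
  rw [S3_eq, S3_eq]
  refine Fintype.sum_equiv ⟨fun x => (x.2.2, x.2.1, x.1), fun x => (x.2.2, x.2.1, x.1),
    fun _ => rfl, fun _ => rfl⟩ _ _ (fun x => ?_)
  obtain ⟨k, l, m⟩ := x
  simp only [Equiv.coe_fn_mk]
  rw [hΓ k l]; ring

lemma keyLM (c : Fin n → Fin n → Fin n → ℝ) (hc : ∀ i j k, c i j k = - c j i k)
    (Γ : Matrix (Fin n) (Fin n) ℝ)
    (hΓ : ∀ i j, Γ i j = Γ j i) (hJ : ∀ i j, Γ⁻¹ i j = Γ⁻¹ j i)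
    (hJG : Γ⁻¹ * Γ = 1) (A : Matrix (Fin n) (Fin n) ℝ) :
    tinner Γ (deltaE c A) c = 4 * ∑ a, ∑ b, Rc c Γ a b * A b a := by
  have hJT : (Γ⁻¹)ᵀ = Γ⁻¹ := Matrix.ext fun i j => hJ j i
  have hCT : ∀ k, (sl c k)ᵀ = -(sl c k) := fun k => Matrix.ext fun i j => hc j i k
  have hR : ∑ a, ∑ b, Rc c Γ a b * A b a = Matrix.trace (Γ⁻¹ * Ricm c Γ * A) := by
    rw [trace2]; rfl
  rw [tinner_slice Γ hJ, hR, traceJRicA c Γ hΓ hJ hJG A]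
  -- expand the delta slice inside the trace
  have hD : ∀ k l : Fin n, Matrix.trace (sl (deltaE c A) k * Γ⁻¹ * (sl c l)ᵀ * Γ⁻¹)
      = (∑ m, A k m * Matrix.trace (sl c m * Γ⁻¹ * (sl c l)ᵀ * Γ⁻¹))
        - Matrix.trace (Aᵀ * sl c k * Γ⁻¹ * (sl c l)ᵀ * Γ⁻¹)
        - Matrix.trace (sl c k * A * Γ⁻¹ * (sl c l)ᵀ * Γ⁻¹) := by
    intro k l
    rw [deltaE_slice]
    simp only [Matrix.sub_mul, Matrix.trace_sub, Finset.sum_mul, Matrix.smul_mul,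
      Matrix.trace_sum, Matrix.trace_smul, rsmul]
  have hsplit : ∑ k, ∑ l, Γ k l * Matrix.trace (sl (deltaE c A) k * Γ⁻¹ * (sl c l)ᵀ * Γ⁻¹)
      = (∑ k, ∑ l, Γ k l * (∑ m, A k m * Matrix.trace (sl c m * Γ⁻¹ * (sl c l)ᵀ * Γ⁻¹)))
        - (∑ k, ∑ l, Γ k l * Matrix.trace (Aᵀ * sl c k * Γ⁻¹ * (sl c l)ᵀ * Γ⁻¹))
        - (∑ k, ∑ l, Γ k l * Matrix.trace (sl c k * A * Γ⁻¹ * (sl c l)ᵀ * Γ⁻¹)) := by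
    simp only [← Finset.sum_sub_distrib]
    exact Finset.sum_congr rfl fun k _ => Finset.sum_congr rfl fun l _ => by
      rw [hD k l]; ring
  rw [hsplit]
  -- piece 1
  have hE1 : (∑ k, ∑ l, Γ k l *
        (∑ m, A k m * Matrix.trace (sl c m * Γ⁻¹ * (sl c l)ᵀ * Γ⁻¹)))
      = ∑ k, ∑ l, Matrix.trace (sl c k * Γ⁻¹ * (sl c l)ᵀ * Γ⁻¹) * (Γ * A) l k :=
    E1gen Γ A hΓ _
  -- piece 2
  have hE2 : (∑ k, ∑ l, Γ k l * Matrix.trace (Aᵀ * sl c k * Γ⁻¹ * (sl c l)ᵀ * Γ⁻¹))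
      = ∑ k, ∑ l, Γ k l * Matrix.trace (Γ⁻¹ * (sl c k * Γ⁻¹ * (sl c l)ᵀ) * A) := by
    have step : ∀ k l : Fin n, Matrix.trace (Aᵀ * sl c k * Γ⁻¹ * (sl c l)ᵀ * Γ⁻¹)
        = Matrix.trace (Γ⁻¹ * (sl c l * Γ⁻¹ * (sl c k)ᵀ) * A) := by
      intro k l
      rw [← Matrix.trace_transpose (Aᵀ * sl c k * Γ⁻¹ * (sl c l)ᵀ * Γ⁻¹)]
      simp only [Matrix.transpose_mul, Matrix.transpose_transpose, hJT, Matrix.mul_assoc]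
    calc (∑ k, ∑ l, Γ k l * Matrix.trace (Aᵀ * sl c k * Γ⁻¹ * (sl c l)ᵀ * Γ⁻¹))
        = ∑ k, ∑ l, Γ k l * Matrix.trace (Γ⁻¹ * (sl c l * Γ⁻¹ * (sl c k)ᵀ) * A) :=
          Finset.sum_congr rfl fun k _ => Finset.sum_congr rfl fun l _ => by rw [step k l]
      _ = ∑ k, ∑ l, Γ k l * Matrix.trace (Γ⁻¹ * (sl c k * Γ⁻¹ * (sl c l)ᵀ) * A) :=
          swapG Γ hΓ _
  -- piece 3
  have hE3 : (∑ k, ∑ l, Γ k l * Matrix.trace (sl c k * A * Γ⁻¹ * (sl c l)ᵀ * Γ⁻¹))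
      = ∑ k, ∑ l, Γ k l * Matrix.trace (Γ⁻¹ * (sl c k * Γ⁻¹ * (sl c l)ᵀ) * A) := by
    have step : ∀ k l : Fin n, Matrix.trace (sl c k * A * Γ⁻¹ * (sl c l)ᵀ * Γ⁻¹)
        = - Matrix.trace (Γ⁻¹ * (sl c l * Γ⁻¹ * (sl c k * A))) := by
      intro k l
      rw [hCT l]
      simp only [Matrix.mul_neg, Matrix.neg_mul, Matrix.trace_neg]
      congr 1
      rw [Matrix.trace_mul_comm (sl c k * A * Γ⁻¹ * sl c l) Γ⁻¹]
      simp only [Matrix.mul_assoc]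
      rw [Matrix.trace_mul_comm Γ⁻¹ (sl c k * (A * (Γ⁻¹ * sl c l)))]
      simp only [Matrix.mul_assoc]
      rw [Matrix.trace_mul_comm (sl c k) (A * (Γ⁻¹ * (sl c l * Γ⁻¹)))]
      simp only [Matrix.mul_assoc]
      rw [Matrix.trace_mul_comm A (Γ⁻¹ * (sl c l * (Γ⁻¹ * sl c k)))]
      simp only [Matrix.mul_assoc]
    have step2 : ∀ k l : Fin n, - Matrix.trace (Γ⁻¹ * (sl c k * Γ⁻¹ * (sl c l * A)))
        = Matrix.trace (Γ⁻¹ * (sl c k * Γ⁻¹ * (sl c l)ᵀ) * A) := by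
      intro k l
      rw [hCT l]
      simp only [Matrix.mul_neg, Matrix.neg_mul, Matrix.trace_neg, neg_neg,
        Matrix.mul_assoc]
    calc (∑ k, ∑ l, Γ k l * Matrix.trace (sl c k * A * Γ⁻¹ * (sl c l)ᵀ * Γ⁻¹))
        = ∑ k, ∑ l, Γ k l * - Matrix.trace (Γ⁻¹ * (sl c l * Γ⁻¹ * (sl c k * A))) :=
          Finset.sum_congr rfl fun k _ => Finset.sum_congr rfl fun l _ => by rw [step k l]
      _ = ∑ k, ∑ l, Γ k l * - Matrix.trace (Γ⁻¹ * (sl c k * Γ⁻¹ * (sl c l * A))) :=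
          swapG Γ hΓ _
      _ = ∑ k, ∑ l, Γ k l * Matrix.trace (Γ⁻¹ * (sl c k * Γ⁻¹ * (sl c l)ᵀ) * A) :=
          Finset.sum_congr rfl fun k _ => Finset.sum_congr rfl fun l _ => by rw [step2 k l]
  rw [hE1, hE2, hE3]
  ring

lemma deltaE_trace_expand (Γ : Matrix (Fin n) (Fin n) ℝ)
    (μ ν : Fin n → Fin n → Fin n → ℝ) (A : Matrix (Fin n) (Fin n) ℝ) (k l : Fin n) :
    Matrix.trace (sl (deltaE μ A) k * Γ⁻¹ * (sl ν l)ᵀ * Γ⁻¹)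
      = (∑ m, A k m * Matrix.trace (sl μ m * Γ⁻¹ * (sl ν l)ᵀ * Γ⁻¹))
        - Matrix.trace (Aᵀ * sl μ k * Γ⁻¹ * (sl ν l)ᵀ * Γ⁻¹)
        - Matrix.trace (sl μ k * A * Γ⁻¹ * (sl ν l)ᵀ * Γ⁻¹) := by
  rw [deltaE_slice]
  simp only [Matrix.sub_mul, Matrix.trace_sub, Finset.sum_mul, Matrix.smul_mul,
    Matrix.trace_sum, Matrix.trace_smul, rsmul]

lemma F1gen (Γ A : Matrix (Fin n) (Fin n) ℝ) (hΓ : ∀ i j, Γ i j = Γ j i)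
    (T : Fin n → Fin n → ℝ) :
    ∑ k, ∑ l, Γ k l * (∑ m, A k m * T m l) = ∑ a, ∑ b, (Γ * A) a b * T b a := by
  simp only [Matrix.mul_apply, Finset.mul_sum, Finset.sum_mul]
  show S3 (fun k l m => Γ k l * (A k m * T m l)) = S3 (fun a b x => Γ a x * A x b * T b a)
  rw [S3_eq, S3_eq]
  refine Fintype.sum_equiv ⟨fun x => (x.2.1, x.2.2, x.1), fun x => (x.2.2, x.1, x.2.1),
    fun _ => rfl, fun _ => rfl⟩ _ _ (fun x => ?_)
  obtain ⟨k, l, m⟩ := x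
  simp only [Equiv.coe_fn_mk]
  rw [hΓ k l]; ring

lemma F2gen (Γ A : Matrix (Fin n) (Fin n) ℝ) (T : Fin n → Fin n → ℝ) :
    ∑ k, ∑ l, Γ k l * (∑ m, A l m * T k m) = ∑ a, ∑ b, (Γ * A) a b * T a b := by
  simp only [Matrix.mul_apply, Finset.mul_sum, Finset.sum_mul]
  show S3 (fun k l m => Γ k l * (A l m * T k m)) = S3 (fun a b x => Γ a x * A x b * T a b)
  rw [S3_eq, S3_eq]
  refine Fintype.sum_equiv ⟨fun x => (x.1, x.2.2, x.2.1), fun x => (x.1, x.2.2, x.2.1),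
    fun _ => rfl, fun _ => rfl⟩ _ _ (fun x => ?_)
  obtain ⟨k, l, m⟩ := x
  simp only [Equiv.coe_fn_mk]
  ring

lemma keyAdj (Γ : Matrix (Fin n) (Fin n) ℝ)
    (hΓ : ∀ i j, Γ i j = Γ j i) (hJ : ∀ i j, Γ⁻¹ i j = Γ⁻¹ j i)
    (hGJ : Γ * Γ⁻¹ = 1) (hJG : Γ⁻¹ * Γ = 1) (A : Matrix (Fin n) (Fin n) ℝ)
    (hAs : Aᵀ * Γ = Γ * A) (μ ν : Fin n → Fin n → Fin n → ℝ) :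
    tinner Γ (deltaE μ A) ν = tinner Γ μ (deltaE ν A) := by
  have hJT : (Γ⁻¹)ᵀ = Γ⁻¹ := Matrix.ext fun i j => hJ j i
  have hΓT : Γᵀ = Γ := Matrix.ext fun i j => hΓ j i
  have hAJ : A * Γ⁻¹ = Γ⁻¹ * Aᵀ := by
    calc A * Γ⁻¹ = (Γ⁻¹ * Γ) * (A * Γ⁻¹) := by rw [hJG, one_mul]
      _ = Γ⁻¹ * ((Γ * A) * Γ⁻¹) := by simp only [Matrix.mul_assoc]
      _ = Γ⁻¹ * ((Aᵀ * Γ) * Γ⁻¹) := by rw [hAs]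
      _ = Γ⁻¹ * (Aᵀ * (Γ * Γ⁻¹)) := by simp only [Matrix.mul_assoc]
      _ = Γ⁻¹ * Aᵀ := by rw [hGJ, Matrix.mul_one]
  have hGA : ∀ i j, (Γ * A) i j = (Γ * A) j i := by
    intro i j
    conv_rhs => rw [← hAs]
    rw [show (Aᵀ * Γ) j i = (Aᵀ * Γᵀ) j i from by rw [hΓT],
      show (Aᵀ * Γᵀ) j i = ((Γ * A)ᵀ) j i from by rw [Matrix.transpose_mul]]
    rfl
  rw [tinner_slice Γ hJ, tinner_slice Γ hJ]
  have hL : ∀ k l : Fin n, Matrix.trace (sl μ k * Γ⁻¹ * (sl (deltaE ν A) l)ᵀ * Γ⁻¹)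
      = (∑ m, A l m * Matrix.trace (sl μ k * Γ⁻¹ * (sl ν m)ᵀ * Γ⁻¹))
        - Matrix.trace (sl μ k * Γ⁻¹ * ((sl ν l)ᵀ * A) * Γ⁻¹)
        - Matrix.trace (sl μ k * Γ⁻¹ * (Aᵀ * (sl ν l)ᵀ) * Γ⁻¹) := by
    intro k l
    rw [deltaE_slice]
    simp only [Matrix.transpose_sub, Matrix.transpose_sum, Matrix.transpose_smul,
      Matrix.transpose_mul, Matrix.transpose_transpose, Matrix.mul_sub, Matrix.sub_mul,
      Matrix.trace_sub, Finset.mul_sum, Finset.sum_mul, Matrix.mul_smul, Matrix.smul_mul,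
      Matrix.trace_sum, Matrix.trace_smul, rsmul]
  have hsplitL : ∑ k, ∑ l, Γ k l * Matrix.trace (sl (deltaE μ A) k * Γ⁻¹ * (sl ν l)ᵀ * Γ⁻¹)
      = (∑ k, ∑ l, Γ k l * (∑ m, A k m * Matrix.trace (sl μ m * Γ⁻¹ * (sl ν l)ᵀ * Γ⁻¹)))
        - (∑ k, ∑ l, Γ k l * Matrix.trace (Aᵀ * sl μ k * Γ⁻¹ * (sl ν l)ᵀ * Γ⁻¹))
        - (∑ k, ∑ l, Γ k l * Matrix.trace (sl μ k * A * Γ⁻¹ * (sl ν l)ᵀ * Γ⁻¹)) := by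
    simp only [← Finset.sum_sub_distrib]
    exact Finset.sum_congr rfl fun k _ => Finset.sum_congr rfl fun l _ => by
      rw [deltaE_trace_expand]; ring
  have hsplitR : ∑ k, ∑ l, Γ k l * Matrix.trace (sl μ k * Γ⁻¹ * (sl (deltaE ν A) l)ᵀ * Γ⁻¹)
      = (∑ k, ∑ l, Γ k l * (∑ m, A l m * Matrix.trace (sl μ k * Γ⁻¹ * (sl ν m)ᵀ * Γ⁻¹)))
        - (∑ k, ∑ l, Γ k l * Matrix.trace (sl μ k * Γ⁻¹ * ((sl ν l)ᵀ * A) * Γ⁻¹))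
        - (∑ k, ∑ l, Γ k l * Matrix.trace (sl μ k * Γ⁻¹ * (Aᵀ * (sl ν l)ᵀ) * Γ⁻¹)) := by
    simp only [← Finset.sum_sub_distrib]
    exact Finset.sum_congr rfl fun k _ => Finset.sum_congr rfl fun l _ => by
      rw [hL k l]; ring
  rw [hsplitL, hsplitR]
  have e1 : (∑ k, ∑ l, Γ k l * (∑ m, A k m * Matrix.trace (sl μ m * Γ⁻¹ * (sl ν l)ᵀ * Γ⁻¹)))
      = ∑ k, ∑ l, Γ k l * (∑ m, A l m * Matrix.trace (sl μ k * Γ⁻¹ * (sl ν m)ᵀ * Γ⁻¹)) := by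
    rw [F1gen Γ A hΓ _, F2gen Γ A _]
    exact swapG (Γ * A) hGA _
  have e2 : (∑ k, ∑ l, Γ k l * Matrix.trace (Aᵀ * sl μ k * Γ⁻¹ * (sl ν l)ᵀ * Γ⁻¹))
      = ∑ k, ∑ l, Γ k l * Matrix.trace (sl μ k * Γ⁻¹ * ((sl ν l)ᵀ * A) * Γ⁻¹) := by
    refine Finset.sum_congr rfl fun k _ => Finset.sum_congr rfl fun l _ => ?_
    congr 1
    calc Matrix.trace (Aᵀ * sl μ k * Γ⁻¹ * (sl ν l)ᵀ * Γ⁻¹)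
        = Matrix.trace (Aᵀ * (sl μ k * (Γ⁻¹ * ((sl ν l)ᵀ * Γ⁻¹)))) := by
          simp only [Matrix.mul_assoc]
      _ = Matrix.trace ((sl μ k * (Γ⁻¹ * ((sl ν l)ᵀ * Γ⁻¹))) * Aᵀ) :=
          Matrix.trace_mul_comm _ _
      _ = Matrix.trace (sl μ k * (Γ⁻¹ * ((sl ν l)ᵀ * (Γ⁻¹ * Aᵀ)))) := by
          simp only [Matrix.mul_assoc]
      _ = Matrix.trace (sl μ k * (Γ⁻¹ * ((sl ν l)ᵀ * (A * Γ⁻¹)))) := by rw [hAJ]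
      _ = Matrix.trace (sl μ k * Γ⁻¹ * ((sl ν l)ᵀ * A) * Γ⁻¹) := by
          simp only [Matrix.mul_assoc]
  have e3 : (∑ k, ∑ l, Γ k l * Matrix.trace (sl μ k * A * Γ⁻¹ * (sl ν l)ᵀ * Γ⁻¹))
      = ∑ k, ∑ l, Γ k l * Matrix.trace (sl μ k * Γ⁻¹ * (Aᵀ * (sl ν l)ᵀ) * Γ⁻¹) := by
    refine Finset.sum_congr rfl fun k _ => Finset.sum_congr rfl fun l _ => ?_
    congr 1
    calc Matrix.trace (sl μ k * A * Γ⁻¹ * (sl ν l)ᵀ * Γ⁻¹)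
        = Matrix.trace (sl μ k * ((A * Γ⁻¹) * ((sl ν l)ᵀ * Γ⁻¹))) := by
          simp only [Matrix.mul_assoc]
      _ = Matrix.trace (sl μ k * ((Γ⁻¹ * Aᵀ) * ((sl ν l)ᵀ * Γ⁻¹))) := by rw [hAJ]
      _ = Matrix.trace (sl μ k * Γ⁻¹ * (Aᵀ * (sl ν l)ᵀ) * Γ⁻¹) := by
          simp only [Matrix.mul_assoc]
  rw [e1, e2, e3]

lemma Ltr (c : Fin n → Fin n → Fin n → ℝ) (Γ : Matrix (Fin n) (Fin n) ℝ)
    (hΓ : ∀ i j, Γ i j = Γ j i) (hJ : ∀ i j, Γ⁻¹ i j = Γ⁻¹ j i) :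
    binner Γ (Ricm c Γ) (Ricm c Γ) = ∑ a, ∑ b, Rc c Γ a b * Rc c Γ b a := by
  rw [binner_slice Γ hJ, Ricm_symm c Γ hΓ hJ, trace2]
  have : Rc c Γ * Rc c Γ = (Γ⁻¹ * Ricm c Γ) * (Γ⁻¹ * Ricm c Γ) := rfl
  rw [this]
  calc Matrix.trace (Ricm c Γ * Γ⁻¹ * Ricm c Γ * Γ⁻¹)
      = Matrix.trace ((Ricm c Γ * (Γ⁻¹ * (Ricm c Γ * Γ⁻¹)))) := by
        simp only [Matrix.mul_assoc]
    _ = Matrix.trace (Γ⁻¹ * (Ricm c Γ * (Γ⁻¹ * Ricm c Γ))) := by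
        rw [Matrix.trace_mul_comm]
        simp only [Matrix.mul_assoc]
    _ = Matrix.trace ((Γ⁻¹ * Ricm c Γ) * (Γ⁻¹ * Ricm c Γ)) := by
        simp only [Matrix.mul_assoc]

lemma keyA1 (Γ W : Matrix (Fin n) (Fin n) ℝ)
    (hΓ : ∀ i j, Γ i j = Γ j i) (hJ : ∀ i j, Γ⁻¹ i j = Γ⁻¹ j i)
    (hGJ : Γ * Γ⁻¹ = 1) (hJG : Γ⁻¹ * Γ = 1) (hW : ∀ i j, W i j = W j i)
    (μ ν : Fin n → Fin n → Fin n → ℝ) :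
    ∑ i, ∑ j, ∑ p, ∑ q,
      ((((2:ℝ) • (Γ⁻¹ * W * Γ⁻¹)) i p * Γ⁻¹ j q
          + Γ⁻¹ i p * (((2:ℝ) • (Γ⁻¹ * W * Γ⁻¹)) j q)) * gdot Γ (μ i j) (ν p q)
        + Γ⁻¹ i p * Γ⁻¹ j q * gdot (Matrix.of fun k l => -2 * W k l) (μ i j) (ν p q))
      = -2 * tinner Γ (deltaE μ (Γ⁻¹ * W)) ν := by
  have hJT : (Γ⁻¹)ᵀ = Γ⁻¹ := Matrix.ext fun i j => hJ j i
  have hΓT : Γᵀ = Γ := Matrix.ext fun i j => hΓ j i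
  have hWT : Wᵀ = W := Matrix.ext fun i j => hW j i
  have hJ'm : ((2:ℝ) • (Γ⁻¹ * W * Γ⁻¹))ᵀ = (2:ℝ) • (Γ⁻¹ * W * Γ⁻¹) := by
    rw [Matrix.transpose_smul, Matrix.transpose_mul, Matrix.transpose_mul, hJT, hWT,
      Matrix.mul_assoc]
  have hJ' : ∀ i j, ((2:ℝ) • (Γ⁻¹ * W * Γ⁻¹)) i j = ((2:ℝ) • (Γ⁻¹ * W * Γ⁻¹)) j i := by
    intro i j
    conv_lhs => rw [← hJ'm]
    rfl
  -- split the sum into three pieces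
  have hsplit : ∑ i, ∑ j, ∑ p, ∑ q,
      ((((2:ℝ) • (Γ⁻¹ * W * Γ⁻¹)) i p * Γ⁻¹ j q
          + Γ⁻¹ i p * (((2:ℝ) • (Γ⁻¹ * W * Γ⁻¹)) j q)) * gdot Γ (μ i j) (ν p q)
        + Γ⁻¹ i p * Γ⁻¹ j q * gdot (Matrix.of fun k l => -2 * W k l) (μ i j) (ν p q))
      = (∑ i, ∑ j, ∑ p, ∑ q, ((2:ℝ) • (Γ⁻¹ * W * Γ⁻¹)) i p * Γ⁻¹ j q
            * gdot Γ (μ i j) (ν p q))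
        + (∑ i, ∑ j, ∑ p, ∑ q, Γ⁻¹ i p * (((2:ℝ) • (Γ⁻¹ * W * Γ⁻¹)) j q)
            * gdot Γ (μ i j) (ν p q))
        + (∑ i, ∑ j, ∑ p, ∑ q, Γ⁻¹ i p * Γ⁻¹ j q
            * gdot (Matrix.of fun k l => -2 * W k l) (μ i j) (ν p q)) := by
    simp only [← Finset.sum_add_distrib]
    exact Finset.sum_congr rfl fun i _ => Finset.sum_congr rfl fun j _ =>
      Finset.sum_congr rfl fun p _ => Finset.sum_congr rfl fun q _ => by ring
  rw [hsplit, masterT _ _ _ hJ' μ ν, masterT _ _ _ hJ μ ν, masterT _ _ _ hJ μ ν]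
  rw [tinner_slice Γ hJ]
  have hsplitR : ∑ k, ∑ l, Γ k l
        * Matrix.trace (sl (deltaE μ (Γ⁻¹ * W)) k * Γ⁻¹ * (sl ν l)ᵀ * Γ⁻¹)
      = (∑ k, ∑ l, Γ k l * (∑ m, (Γ⁻¹ * W) k m
            * Matrix.trace (sl μ m * Γ⁻¹ * (sl ν l)ᵀ * Γ⁻¹)))
        - (∑ k, ∑ l, Γ k l * Matrix.trace ((Γ⁻¹ * W)ᵀ * sl μ k * Γ⁻¹ * (sl ν l)ᵀ * Γ⁻¹))
        - (∑ k, ∑ l, Γ k l * Matrix.trace (sl μ k * (Γ⁻¹ * W) * Γ⁻¹ * (sl ν l)ᵀ * Γ⁻¹)) := by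
    simp only [← Finset.sum_sub_distrib]
    exact Finset.sum_congr rfl fun k _ => Finset.sum_congr rfl fun l _ => by
      rw [deltaE_trace_expand]; ring
  rw [hsplitR]
  -- piece (i)
  have hi : (∑ k, ∑ l, Γ k l * (∑ m, (Γ⁻¹ * W) k m
        * Matrix.trace (sl μ m * Γ⁻¹ * (sl ν l)ᵀ * Γ⁻¹)))
      = ∑ k, ∑ l, W k l * Matrix.trace (sl μ k * Γ⁻¹ * (sl ν l)ᵀ * Γ⁻¹) := by
    rw [F1gen Γ (Γ⁻¹ * W) hΓ _]
    have hGW : Γ * (Γ⁻¹ * W) = W := by rw [← Matrix.mul_assoc, hGJ, one_mul]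
    rw [hGW]
    exact swapG W hW _
  -- piece (ii)
  have hii : (∑ k, ∑ l, Γ k l * Matrix.trace ((Γ⁻¹ * W)ᵀ * sl μ k * Γ⁻¹ * (sl ν l)ᵀ * Γ⁻¹))
      = ∑ k, ∑ l, Γ k l
          * Matrix.trace (sl μ k * Γ⁻¹ * (sl ν l)ᵀ * (Γ⁻¹ * (W * Γ⁻¹))) := by
    refine Finset.sum_congr rfl fun k _ => Finset.sum_congr rfl fun l _ => ?_
    congr 1
    have hQT : (Γ⁻¹ * W)ᵀ = W * Γ⁻¹ := by rw [Matrix.transpose_mul, hJT, hWT]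
    rw [hQT]
    calc Matrix.trace (W * Γ⁻¹ * sl μ k * Γ⁻¹ * (sl ν l)ᵀ * Γ⁻¹)
        = Matrix.trace ((W * Γ⁻¹) * (sl μ k * (Γ⁻¹ * ((sl ν l)ᵀ * Γ⁻¹)))) := by
          simp only [Matrix.mul_assoc]
      _ = Matrix.trace ((sl μ k * (Γ⁻¹ * ((sl ν l)ᵀ * Γ⁻¹))) * (W * Γ⁻¹)) :=
          Matrix.trace_mul_comm _ _
      _ = Matrix.trace (sl μ k * Γ⁻¹ * (sl ν l)ᵀ * (Γ⁻¹ * (W * Γ⁻¹))) := by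
          simp only [Matrix.mul_assoc]
  -- piece (iii)
  have hiii : (∑ k, ∑ l, Γ k l * Matrix.trace (sl μ k * (Γ⁻¹ * W) * Γ⁻¹ * (sl ν l)ᵀ * Γ⁻¹))
      = ∑ k, ∑ l, Γ k l
          * Matrix.trace (sl μ k * (Γ⁻¹ * (W * Γ⁻¹)) * (sl ν l)ᵀ * Γ⁻¹) := by
    refine Finset.sum_congr rfl fun k _ => Finset.sum_congr rfl fun l _ => ?_
    congr 2
    simp only [Matrix.mul_assoc]
  -- LHS piece 1
  have hL1 : (∑ k, ∑ l, Γ k l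
        * Matrix.trace (sl μ k * Γ⁻¹ * (sl ν l)ᵀ * ((2:ℝ) • (Γ⁻¹ * W * Γ⁻¹))))
      = 2 * ∑ k, ∑ l, Γ k l
          * Matrix.trace (sl μ k * Γ⁻¹ * (sl ν l)ᵀ * (Γ⁻¹ * (W * Γ⁻¹))) := by
    rw [Finset.mul_sum]
    refine Finset.sum_congr rfl fun k _ => ?_
    rw [Finset.mul_sum]
    refine Finset.sum_congr rfl fun l _ => ?_
    rw [Matrix.mul_smul, Matrix.trace_smul, rsmul]
    simp only [Matrix.mul_assoc]
    ring
  -- LHS piece 2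
  have hL2 : (∑ k, ∑ l, Γ k l
        * Matrix.trace (sl μ k * ((2:ℝ) • (Γ⁻¹ * W * Γ⁻¹)) * (sl ν l)ᵀ * Γ⁻¹))
      = 2 * ∑ k, ∑ l, Γ k l
          * Matrix.trace (sl μ k * (Γ⁻¹ * (W * Γ⁻¹)) * (sl ν l)ᵀ * Γ⁻¹) := by
    rw [Finset.mul_sum]
    refine Finset.sum_congr rfl fun k _ => ?_
    rw [Finset.mul_sum]
    refine Finset.sum_congr rfl fun l _ => ?_
    rw [Matrix.mul_smul, Matrix.smul_mul, Matrix.smul_mul, Matrix.trace_smul, rsmul]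
    simp only [Matrix.mul_assoc]
    ring
  -- LHS piece 3
  have hL3 : (∑ k, ∑ l, (Matrix.of fun k l => -2 * W k l) k l
        * Matrix.trace (sl μ k * Γ⁻¹ * (sl ν l)ᵀ * Γ⁻¹))
      = -2 * ∑ k, ∑ l, W k l * Matrix.trace (sl μ k * Γ⁻¹ * (sl ν l)ᵀ * Γ⁻¹) := by
    rw [Finset.mul_sum]
    refine Finset.sum_congr rfl fun k _ => ?_
    rw [Finset.mul_sum]
    refine Finset.sum_congr rfl fun l _ => ?_
    rw [Matrix.of_apply]
    ring
  rw [hi, hii, hiii, hL1, hL2, hL3]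
  ring



section Calc

variable (c : Fin n → Fin n → Fin n → ℝ) (G : ℝ → Matrix (Fin n) (Fin n) ℝ) (t : ℝ)

lemma diff_det (hent : ∀ i j, DifferentiableAt ℝ (fun u => G u i j) t) :
    DifferentiableAt ℝ (fun u => (G u).det) t := by
  have h : (fun u => (G u).det)
      = fun u => ∑ σ : Equiv.Perm (Fin n),
          ((Equiv.Perm.sign σ : ℤ) : ℝ) * ∏ i, G u (σ i) i :=
    funext fun u => by rw [Matrix.det_apply']
  rw [h]
  exact DifferentiableAt.fun_sum fun σ _ =>
    (DifferentiableAt.fun_finsetProd fun i _ => hent (σ i) i).const_mul _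

lemma diff_adj (hent : ∀ i j, DifferentiableAt ℝ (fun u => G u i j) t) (i j : Fin n) :
    DifferentiableAt ℝ (fun u => (G u).adjugate i j) t := by
  have h : (fun u => (G u).adjugate i j)
      = fun u => ∑ σ : Equiv.Perm (Fin n), ((Equiv.Perm.sign σ : ℤ) : ℝ)
          * ∏ k, ((G u).updateRow j (Pi.single i 1)) (σ k) k :=
    funext fun u => by rw [Matrix.adjugate_apply, Matrix.det_apply']
  rw [h]
  refine DifferentiableAt.fun_sum fun σ _ => DifferentiableAt.const_mul
    (DifferentiableAt.fun_finsetProd fun k _ => ?_) _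
  by_cases hk : σ k = j
  · simp only [Matrix.updateRow_apply, hk, if_true]
    exact differentiableAt_const _
  · simp only [Matrix.updateRow_apply, hk, if_false]
    exact hent (σ k) k

lemma diff_inv (hent : ∀ i j, DifferentiableAt ℝ (fun u => G u i j) t)
    (hdet : (G t).det ≠ 0) (i j : Fin n) :
    DifferentiableAt ℝ (fun u => (G u)⁻¹ i j) t := by
  have h : (fun u => (G u)⁻¹ i j)
      = fun u => ((G u).det)⁻¹ * (G u).adjugate i j := by
    funext u
    rw [Matrix.inv_def]
    show Ring.inverse (G u).det * (G u).adjugate i j = _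
    rw [Ring.inverse_eq_inv]
  rw [h]
  exact ((diff_det G t hent).inv hdet).mul (diff_adj G t hent i j)

end Calc


end RFN

open RFN Matrix

theorem stmt5 {n : ℕ} (c : Fin n → Fin n → Fin n → ℝ) (hc : IsLieSC c)
    (hnil : IsNilpotentSC c)
    (G : ℝ → Matrix (Fin n) (Fin n) ℝ) (hpd : ∀ t, (G t).PosDef) (hsym : ∀ t, (G t).IsSymm)
    (hflow : ∀ (t : ℝ) (i j : Fin n),
      HasDerivAt (fun u => G u i j) (-2 * Ricm c (G t) i j) t) (t : ℝ) :
    HasDerivAt (fun u => scalR c (G u)) (2 * ric2 c (G t)) t ∧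
    HasDerivAt (fun u => ric2 c (G u))
      (-(tinner (G t) (deltaE c (Rc c (G t))) (deltaE c (Rc c (G t))))) t := by
  have hdet : ∀ u, IsUnit (G u).det := fun u => isUnit_iff_ne_zero.mpr (hpd u).det_pos.ne'
  have hentry : ∀ i j, DifferentiableAt ℝ (fun u => G u i j) t :=
    fun i j => (hflow t i j).differentiableAt
  have hΓu : ∀ u (i j : Fin n), G u i j = G u j i :=
    fun u i j => congrFun (congrFun (hsym u) j) i
  have hJmu : ∀ u, ((G u)⁻¹)ᵀ = (G u)⁻¹ := fun u => by
    rw [Matrix.transpose_nonsing_inv, hsym u]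
  have hJu : ∀ u (i j : Fin n), (G u)⁻¹ i j = (G u)⁻¹ j i :=
    fun u i j => congrFun (congrFun (hJmu u) j) i
  have hGJu : ∀ u, G u * (G u)⁻¹ = 1 := fun u => Matrix.mul_nonsing_inv _ (hdet u)
  have hJGu : ∀ u, (G u)⁻¹ * G u = 1 := fun u => Matrix.nonsing_inv_mul _ (hdet u)
  have hPsym : ∀ i j, Ricm c (G t) i j = Ricm c (G t) j i :=
    fun i j => congrFun (congrFun (Ricm_symm c (G t) (hΓu t) (hJu t)) j) i
  -- derivative of the inverse entries
  have hWd : ∀ i j, HasDerivAt (fun u => (G u)⁻¹ i j)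
      ((Matrix.of fun a b => deriv (fun u => (G u)⁻¹ a b) t) i j) t :=
    fun i j => (diff_inv G t hentry (hpd t).det_pos.ne' i j).hasDerivAt
  have h0 : ∀ i j : Fin n, (∑ k, ((-2 * Ricm c (G t) i k) * (G t)⁻¹ k j
      + G t i k * (Matrix.of fun a b => deriv (fun u => (G u)⁻¹ a b) t) k j)) = 0 := by
    intro i j
    have h1 : HasDerivAt (fun u => ∑ k, G u i k * (G u)⁻¹ k j)
        (∑ k, ((-2 * Ricm c (G t) i k) * (G t)⁻¹ k j
          + G t i k * (Matrix.of fun a b => deriv (fun u => (G u)⁻¹ a b) t) k j)) t :=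
      HasDerivAt.fun_sum fun k _ => (hflow t i k).mul (hWd k j)
    have hone : (fun u => ∑ k, G u i k * (G u)⁻¹ k j)
        = fun _ => (1 : Matrix (Fin n) (Fin n) ℝ) i j :=
      funext fun u => by rw [← Matrix.mul_apply, hGJu u]
    rw [hone] at h1
    exact h1.unique (hasDerivAt_const _ _)
  have hGM : G t * (Matrix.of fun a b => deriv (fun u => (G u)⁻¹ a b) t)
      = (2:ℝ) • (Ricm c (G t) * (G t)⁻¹) := by
    ext i j
    have h2 := h0 i j
    rw [Finset.sum_add_distrib] at h2
    have h3 : (∑ k, G t i k * (Matrix.of fun a b => deriv (fun u => (G u)⁻¹ a b) t) k j)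
        = - ∑ k, (-2 * Ricm c (G t) i k) * (G t)⁻¹ k j := by linarith
    show (G t * (Matrix.of fun a b => deriv (fun u => (G u)⁻¹ a b) t)) i j
      = ((2:ℝ) • (Ricm c (G t) * (G t)⁻¹)) i j
    rw [Matrix.mul_apply, h3, entry_smul, Matrix.mul_apply]
    rw [← Finset.sum_neg_distrib, Finset.mul_sum]
    exact Finset.sum_congr rfl fun k _ => by ring
  have hWval : (Matrix.of fun a b => deriv (fun u => (G u)⁻¹ a b) t)
      = (2:ℝ) • ((G t)⁻¹ * Ricm c (G t) * (G t)⁻¹) := by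
    calc (Matrix.of fun a b => deriv (fun u => (G u)⁻¹ a b) t)
        = ((G t)⁻¹ * G t) * (Matrix.of fun a b => deriv (fun u => (G u)⁻¹ a b) t) := by
          rw [hJGu t, one_mul]
      _ = (G t)⁻¹ * (G t * (Matrix.of fun a b => deriv (fun u => (G u)⁻¹ a b) t)) := by
          rw [Matrix.mul_assoc]
      _ = (G t)⁻¹ * ((2:ℝ) • (Ricm c (G t) * (G t)⁻¹)) := by rw [hGM]
      _ = (2:ℝ) • ((G t)⁻¹ * Ricm c (G t) * (G t)⁻¹) := by
          rw [Matrix.mul_smul, Matrix.mul_assoc]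
  have hJder : ∀ i j, HasDerivAt (fun u => (G u)⁻¹ i j)
      (((2:ℝ) • ((G t)⁻¹ * Ricm c (G t) * (G t)⁻¹)) i j) t := by
    intro i j
    have h := hWd i j
    rw [hWval] at h
    exact h
  have hgd : ∀ (x y : Fin n → ℝ), HasDerivAt (fun u => gdot (G u) x y)
      (∑ k, ∑ l, x k * (-2 * Ricm c (G t) k l) * y l) t := fun x y =>
    HasDerivAt.fun_sum fun k _ => HasDerivAt.fun_sum fun l _ =>
      ((hflow t k l).const_mul (x k)).mul_const (y l)
  have hraw : ∀ μ ν : Fin n → Fin n → Fin n → ℝ, HasDerivAt (fun u => tinner (G u) μ ν)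
      (∑ i, ∑ j, ∑ p, ∑ q,
        ((((2:ℝ) • ((G t)⁻¹ * Ricm c (G t) * (G t)⁻¹)) i p * (G t)⁻¹ j q
            + (G t)⁻¹ i p * (((2:ℝ) • ((G t)⁻¹ * Ricm c (G t) * (G t)⁻¹)) j q))
              * gdot (G t) (μ i j) (ν p q)
          + (G t)⁻¹ i p * (G t)⁻¹ j q
              * gdot (Matrix.of fun k l => -2 * Ricm c (G t) k l) (μ i j) (ν p q))) t := by
    intro μ ν
    refine HasDerivAt.fun_sum fun i _ => HasDerivAt.fun_sum fun j _ =>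
      HasDerivAt.fun_sum fun p _ => HasDerivAt.fun_sum fun q _ => ?_
    exact ((hJder i p).mul (hJder j q)).mul (hgd (μ i j) (ν p q))
  have hd2 : ∀ μ ν : Fin n → Fin n → Fin n → ℝ, HasDerivAt (fun u => tinner (G u) μ ν)
      (-2 * tinner (G t) (deltaE μ (Rc c (G t))) ν) t := by
    intro μ ν
    have h := hraw μ ν
    rw [keyA1 (G t) (Ricm c (G t)) (hΓu t) (hJu t) (hGJu t) (hJGu t) hPsym μ ν] at h
    exact h
  constructor
  · have h := (hd2 c c).const_mul (-(1/4) : ℝ)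
    have hval : (-(1/4) : ℝ) * (-2 * tinner (G t) (deltaE c (Rc c (G t))) c)
        = 2 * ric2 c (G t) := by
      rw [keyLM c hc.1 (G t) (hΓu t) (hJu t) (hJGu t) (Rc c (G t))]
      have h2 : ric2 c (G t) = ∑ a, ∑ b, Rc c (G t) a b * Rc c (G t) b a :=
        Ltr c (G t) (hΓu t) (hJu t)
      rw [h2]; ring
    rw [hval] at h
    exact h
  · -- second part
    have hQd : ∀ a b, DifferentiableAt ℝ (fun u => Rc c (G u) a b) t := by
      intro a b
      have hfun : (fun u => Rc c (G u) a b) = fun u => ∑ m, (G u)⁻¹ a m *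
          (-(1/2) * (∑ i, ∑ j, (G u)⁻¹ i j * gdot (G u) (c m i) (c b j))
            + (1/4) * (∑ i, ∑ j, ∑ p, ∑ q, (G u)⁻¹ i p * (G u)⁻¹ j q *
                (∑ k, c i j k * G u k m) * (∑ l, c p q l * G u l b))) := rfl
      rw [hfun]
      have hinv := fun i j => diff_inv G t hentry (hpd t).det_pos.ne' i j
      have hgdd : ∀ x y : Fin n → ℝ, DifferentiableAt ℝ (fun u => gdot (G u) x y) t :=
        fun x y => (hgd x y).differentiableAt
      refine DifferentiableAt.fun_sum fun m _ => (hinv a m).mul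
        (DifferentiableAt.add (DifferentiableAt.const_mul ?_ _)
          (DifferentiableAt.const_mul ?_ _))
      · exact DifferentiableAt.fun_sum fun i _ => DifferentiableAt.fun_sum fun j _ =>
          (hinv i j).mul (hgdd (c m i) (c b j))
      · exact DifferentiableAt.fun_sum fun i _ => DifferentiableAt.fun_sum fun j _ =>
          DifferentiableAt.fun_sum fun p _ => DifferentiableAt.fun_sum fun q _ =>
            (((hinv i p).mul (hinv j q)).mul
              (DifferentiableAt.fun_sum fun k _ => (hentry k m).const_mul _)).mul
              (DifferentiableAt.fun_sum fun l _ => (hentry l b).const_mul _)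
    have hq' : ∀ a b, HasDerivAt (fun u => Rc c (G u) a b)
        (deriv (fun u => Rc c (G u) a b) t) t := fun a b => (hQd a b).hasDerivAt
    have hAs : (Rc c (G t))ᵀ * G t = G t * Rc c (G t) := by
      have h1 : G t * Rc c (G t) = Ricm c (G t) := by
        show G t * ((G t)⁻¹ * Ricm c (G t)) = _
        rw [← Matrix.mul_assoc, hGJu t, one_mul]
      have h2 : (Rc c (G t))ᵀ * G t = Ricm c (G t) := by
        show ((G t)⁻¹ * Ricm c (G t))ᵀ * G t = _
        rw [Matrix.transpose_mul, Ricm_symm c (G t) (hΓu t) (hJu t), hJmu t,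
          Matrix.mul_assoc, hJGu t, Matrix.mul_one]
      rw [h1, h2]
    have hFfun : (fun u => ∑ a, ∑ b, Rc c (G u) a b * Rc c (G t) b a)
        = fun u => (1/4) * tinner (G u) (deltaE c (Rc c (G t))) c := funext fun u => by
      rw [keyLM c hc.1 (G u) (hΓu u) (hJu u) (hJGu u) (Rc c (G t))]; ring
    have hF1 : HasDerivAt (fun u => ∑ a, ∑ b, Rc c (G u) a b * Rc c (G t) b a)
        (∑ a, ∑ b, deriv (fun u => Rc c (G u) a b) t * Rc c (G t) b a) t :=
      HasDerivAt.fun_sum fun a _ => HasDerivAt.fun_sum fun b _ => (hq' a b).mul_const _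
    have hF2 : HasDerivAt (fun u => ∑ a, ∑ b, Rc c (G u) a b * Rc c (G t) b a)
        ((1/4) * (-2 * tinner (G t)
          (deltaE (deltaE c (Rc c (G t))) (Rc c (G t))) c)) t := by
      rw [hFfun]
      exact (hd2 _ c).const_mul _
    have hkey : ∑ a, ∑ b, deriv (fun u => Rc c (G u) a b) t * Rc c (G t) b a
        = -(1/2) * tinner (G t) (deltaE c (Rc c (G t))) (deltaE c (Rc c (G t))) := by
      have h := hF1.unique hF2
      rw [h, keyAdj (G t) (hΓu t) (hJu t) (hGJu t) (hJGu t) (Rc c (G t)) hAs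
        (deltaE c (Rc c (G t))) c]
      ring
    have hG2 : HasDerivAt (fun u => ∑ a, ∑ b, Rc c (G u) a b * Rc c (G u) b a)
        (∑ a, ∑ b, (deriv (fun u => Rc c (G u) a b) t * Rc c (G t) b a
          + Rc c (G t) a b * deriv (fun u => Rc c (G u) b a) t)) t :=
      HasDerivAt.fun_sum fun a _ => HasDerivAt.fun_sum fun b _ => (hq' a b).mul (hq' b a)
    have hricfun : (fun u => ric2 c (G u))
        = fun u => ∑ a, ∑ b, Rc c (G u) a b * Rc c (G u) b a :=
      funext fun u => Ltr c (G u) (hΓu u) (hJu u)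
    have hswap : ∑ a, ∑ b, Rc c (G t) a b * deriv (fun u => Rc c (G u) b a) t
        = ∑ a, ∑ b, deriv (fun u => Rc c (G u) a b) t * Rc c (G t) b a := by
      rw [Finset.sum_comm]
      exact Finset.sum_congr rfl fun a _ => Finset.sum_congr rfl fun b _ => mul_comm _ _
    have hvalue : (∑ a, ∑ b, (deriv (fun u => Rc c (G u) a b) t * Rc c (G t) b a
          + Rc c (G t) a b * deriv (fun u => Rc c (G u) b a) t))
        = -(tinner (G t) (deltaE c (Rc c (G t))) (deltaE c (Rc c (G t)))) := by
      simp only [Finset.sum_add_distrib]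
      rw [hswap, hkey]
      ring
    rw [hricfun, ← hvalue]
    exact hG2
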